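/- Let 1 < p < ∞ and α > −1. Assume ω is a weight on the upper half-plane H and Φ is a normalized Young function in the class B_p. Then there is a constant C > 0, depending only on p and Φ, such that for every compactly supported measurable function f, (∫_H (M^d_{Φ,ω,α} f(z))^p ω(z) dV_α(z))^{1/p} ≤ C (∫_H |f(z)|^p ω(z) dV_α(z))^{1/p}. -/

import Mathlib

open MeasureTheory Set Filter
open scoped ENNReal NNReal

noncomputable section

/-- The upper half-plane `H = {z : 0 < Im z}`. -/
def UHP : Set ℂ := {z : ℂ | 0 < z.im}

/-- The measure `dV_α = y^α dx dy` supported on the upper half-plane. -/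
def Vm (α : ℝ) : Measure ℂ :=
  MeasureTheory.volume.withDensity
    (fun z => if 0 < z.im then ENNReal.ofReal (z.im ^ α) else 0)

/-- The Carleson square `Q_I` attached to the interval `I = (a, b)`. -/
def Qbox (a b : ℝ) : Set ℂ :=
  {z : ℂ | z.re ∈ Set.Ioo a b ∧ z.im ∈ Set.Ioo 0 (b - a)}

/-- The weighted measure `|E|_{ω,α} = ∫_E ω dV_α` of a set `E`. -/
def wvol (α : ℝ) (ω : ℂ → ℝ) (E : Set ℂ) : ℝ≥0∞ :=
  ∫⁻ z in E, ENNReal.ofReal (ω z) ∂(Vm α)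

/-- A weight: a nonnegative locally integrable function on the upper half-plane. -/
def IsWeight (α : ℝ) (ω : ℂ → ℝ) : Prop :=
  Measurable ω ∧ (∀ z, 0 ≤ ω z) ∧ MeasureTheory.LocallyIntegrableOn ω UHP (Vm α)

/-- A normalized Young function: continuous, convex, increasing on `[0,∞)`,
with `Φ 0 = 0`, `Φ 1 = 1` and `Φ t → ∞` as `t → ∞`. -/
structure IsNormalizedYoung (Φ : ℝ → ℝ) : Prop where
  cont : ContinuousOn Φ (Set.Ici 0)
  convex : ConvexOn ℝ (Set.Ici 0) Φ
  mono : MonotoneOn Φ (Set.Ici 0)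
  map_zero : Φ 0 = 0
  map_one : Φ 1 = 1
  tendsto_atTop : Filter.Tendsto Φ Filter.atTop Filter.atTop

/-- The `Δ₂` (doubling) condition with constant `K`. -/
def Delta2 (Φ : ℝ → ℝ) (K : ℝ) : Prop :=
  1 < K ∧ ∀ t : ℝ, 0 ≤ t → Φ (2 * t) ≤ K * Φ t

/-- The class `B_p`: `Δ₂` together with `∫_c^∞ Φ(t)/t^p dt/t < ∞` for some `c > 0`. -/
def InBp (Φ : ℝ → ℝ) (p : ℝ) : Prop :=
  (∃ K : ℝ, Delta2 Φ K) ∧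
    ∃ c : ℝ, 0 < c ∧ (∫⁻ t in Set.Ioi c, ENNReal.ofReal (Φ t / t ^ (p + 1))) < ⊤

/-- The Luxemburg norm `‖f‖_{Q_I, Φ, ω, α}` over the Carleson square of `I = (a,b)`. -/
def luxNorm (α : ℝ) (Φ : ℝ → ℝ) (ω : ℂ → ℝ) (a b : ℝ) (f : ℂ → ℂ) : ℝ≥0∞ :=
  ⨅ (t : ℝ) (_ : 0 < t)
    (_ : (∫⁻ z in Qbox a b, ENNReal.ofReal (Φ (‖f z‖ / t) * ω z) ∂(Vm α)) /
          wvol α ω (Qbox a b) ≤ 1),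
    ENNReal.ofReal t

/-- The maximal function `M_{Φ,ω,α} f`. -/
def maxFn (α : ℝ) (Φ : ℝ → ℝ) (ω : ℂ → ℝ) (f : ℂ → ℂ) (z : ℂ) : ℝ≥0∞ :=
  ⨆ (a : ℝ) (b : ℝ) (_ : z ∈ Qbox a b), luxNorm α Φ ω a b f

/-- The dyadic grid `D^β`, as a set of pairs of endpoints. -/
def dyadicGrid (β : ℝ) : Set (ℝ × ℝ) :=
  {I : ℝ × ℝ | ∃ j m : ℤ, I.1 = (2 : ℝ) ^ j * (m + (-1 : ℝ) ^ j * β) ∧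
    I.2 = (2 : ℝ) ^ j * (m + 1 + (-1 : ℝ) ^ j * β)}

/-- The dyadic maximal function `M^{d,β}_{Φ,ω,α} f`. -/
def dyadicMax (β α : ℝ) (Φ : ℝ → ℝ) (ω : ℂ → ℝ) (f : ℂ → ℂ) (z : ℂ) : ℝ≥0∞ :=
  ⨆ (I : ℝ × ℝ) (_ : I ∈ dyadicGrid β) (_ : z ∈ Qbox I.1 I.2),
    luxNorm α Φ ω I.1 I.2 f

/-- The Hardy–Littlewood maximal function `M_α g` of the upper half-plane. -/
def hlMax (α : ℝ) (g : ℂ → ℝ) (z : ℂ) : ℝ≥0∞ :=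
  ⨆ (a : ℝ) (b : ℝ) (_ : z ∈ Qbox a b),
    (∫⁻ w in Qbox a b, ENNReal.ofReal |g w| ∂(Vm α)) / Vm α (Qbox a b)

/-- The weighted Hardy–Littlewood maximal function `M_{ω,α} f`. -/
def whlMax (α : ℝ) (ω : ℂ → ℝ) (f : ℂ → ℂ) (z : ℂ) : ℝ≥0∞ :=
  ⨆ (a : ℝ) (b : ℝ) (_ : z ∈ Qbox a b),
    (∫⁻ w in Qbox a b, ENNReal.ofReal (‖f w‖ * ω w) ∂(Vm α)) /
      wvol α ω (Qbox a b)

/-- The Békollè–Bonami constant `[ω]_{B_{p,α}}`. -/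
def BBnorm (α p : ℝ) (ω : ℂ → ℝ) : ℝ≥0∞ :=
  ⨆ (a : ℝ) (b : ℝ) (_ : a < b),
    (wvol α ω (Qbox a b) / Vm α (Qbox a b)) *
      ((∫⁻ z in Qbox a b, ENNReal.ofReal (ω z) ^ (1 - p / (p - 1)) ∂(Vm α)) /
          Vm α (Qbox a b)) ^ (p - 1)

/-- Membership in the Békollè–Bonami class `B_{p,α}`. -/
def InBB (α p : ℝ) (ω : ℂ → ℝ) : Prop := BBnorm α p ω < ⊤

/-- Membership in `𝔹_{∞,α} = ⋃_{p>1} B_{p,α}`. -/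
def InBBinfty (α : ℝ) (ω : ℂ → ℝ) : Prop := ∃ p : ℝ, 1 < p ∧ InBB α p ω

/-- The quantity `∫_H |f|^p ω dV_α`. -/
def lpInt (α p : ℝ) (ω : ℂ → ℝ) (f : ℂ → ℂ) : ℝ≥0∞ :=
  ∫⁻ z, ENNReal.ofReal ‖f z‖ ^ p * ENNReal.ofReal (ω z) ∂(Vm α)

/-- The function `K_μ(z) = sup_{I : z ∈ Q_I} μ(Q_I)/|Q_I|_{ω,α}`. -/
def Kmu (α : ℝ) (ω : ℂ → ℝ) (μ : Measure ℂ) (z : ℂ) : ℝ≥0∞ :=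
  ⨆ (a : ℝ) (b : ℝ) (_ : z ∈ Qbox a b), μ (Qbox a b) / wvol α ω (Qbox a b)

/-- `ω` is `α`-doubling with doubling function `φ` and constant `K`. -/
structure AlphaDoubling (α : ℝ) (ω : ℂ → ℝ) (φ : ℝ≥0∞ → ℝ≥0∞) (K : ℝ≥0∞) : Prop where
  mono : Monotone φ
  map_one : φ 1 = 1
  one_le : 1 ≤ K
  bound : ∀ a b : ℝ, ∀ E ⊆ Qbox a b, MeasurableSet E →
    wvol α ω (Qbox a b) / wvol α ω E ≤ K * φ (Vm α (Qbox a b) / Vm α E)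

/-- The complementary (conjugate) Young function `Ψ(s) = sup_{t ≥ 0} (t s − Φ(t))`,
valued in `ℝ≥0∞`. -/
def conjugateYoung (Φ : ℝ → ℝ) (s : ℝ) : ℝ≥0∞ :=
  ⨆ (t : ℝ) (_ : 0 ≤ t), ENNReal.ofReal (t * s - Φ t)

/-- The unweighted Luxemburg norm for an `ℝ≥0∞`-valued Young function. -/
def luxNormE (α : ℝ) (Ψ : ℝ → ℝ≥0∞) (a b : ℝ) (g : ℂ → ℝ) : ℝ≥0∞ :=
  ⨅ (t : ℝ) (_ : 0 < t)
    (_ : (∫⁻ z in Qbox a b, Ψ (|g z| / t) ∂(Vm α)) / Vm α (Qbox a b) ≤ 1),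
    ENNReal.ofReal t

/-- The Békollè–Bonami `B_{∞,α}` constant
`[ω]_{B_{∞,α}} = sup_I |Q_I|_{ω,α}⁻¹ ∫_{Q_I} M_α(ω χ_{Q_I}) dV_α`. -/
def BBinftyNorm (α : ℝ) (ω : ℂ → ℝ) : ℝ≥0∞ :=
  ⨆ (a : ℝ) (b : ℝ) (_ : a < b),
    (∫⁻ z in Qbox a b, hlMax α ((Qbox a b).indicator ω) z ∂(Vm α)) /
      wvol α ω (Qbox a b)

end


noncomputable section StatementTenProof

variable {Φ : ℝ → ℝ} {p α : ℝ} {ω : ℂ → ℝ} {f : ℂ → ℂ}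

def phiP (Φ : ℝ → ℝ) (t : ℝ) : ℝ := Φ (max t 0)

variable {Φ : ℝ → ℝ} {p : ℝ}

lemma phiP_eq (t : ℝ) (ht : 0 ≤ t) : phiP Φ t = Φ t := by
  simp [phiP, max_eq_left ht]

lemma phiP_mono (hΦ : IsNormalizedYoung Φ) : Monotone (phiP Φ) := fun x y h =>
  hΦ.mono (le_max_right x 0) (le_max_right y 0) (max_le_max h le_rfl)

lemma phiP_nonneg (hΦ : IsNormalizedYoung Φ) (t : ℝ) : 0 ≤ phiP Φ t := by
  have := hΦ.mono (le_refl (0:ℝ)).ge.le (le_max_right t 0) (le_max_right t 0)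
  simpa [hΦ.map_zero, phiP] using this

lemma phiP_meas (hΦ : IsNormalizedYoung Φ) : Measurable (phiP Φ) := by
  have : Continuous (phiP Φ) :=
    hΦ.cont.comp_continuous (continuous_id.max continuous_const)
      (fun x => le_max_right x 0)
  exact this.measurable

lemma phiP_zero (hΦ : IsNormalizedYoung Φ) : phiP Φ 0 = 0 := by
  simp [phiP, hΦ.map_zero]

lemma phiP_one (hΦ : IsNormalizedYoung Φ) : phiP Φ 1 = 1 := by
  simp [phiP, hΦ.map_one]

lemma phiP_le_half (hΦ : IsNormalizedYoung Φ) {t : ℝ} (ht : t ≤ 1/2) :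
    phiP Φ t ≤ 1/2 := by
  have h1 : phiP Φ t ≤ phiP Φ (1/2) := phiP_mono hΦ ht
  have h2 : Φ (1/2) ≤ 1/2 := by
    have := hΦ.convex.2 (mem_Ici.2 (le_refl (0:ℝ))) (mem_Ici.2 (zero_le_one))
      (by norm_num : (0:ℝ) ≤ 1/2) (by norm_num : (0:ℝ) ≤ 1/2) (by norm_num)
    simpa [hΦ.map_zero, hΦ.map_one] using this
  calc phiP Φ t ≤ Φ (1/2) := by rw [phiP_eq (1/2) (by norm_num)] at h1; exact h1
    _ ≤ 1/2 := h2

/-- tail integral -/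
def Jint (Φ : ℝ → ℝ) (p : ℝ) : ℝ≥0∞ :=
  ∫⁻ t in Set.Ioi 1, ENNReal.ofReal (phiP Φ t / t ^ (p + 1))

lemma Jint_lt_top (hΦ : IsNormalizedYoung Φ) (hp : 1 < p) (hBp : InBp Φ p) :
    Jint Φ p < ⊤ := by
  obtain ⟨-, c, hc, hfin⟩ := hBp
  have hcong : ∀ c' : ℝ, 0 < c' →
      (∫⁻ t in Set.Ioi c', ENNReal.ofReal (phiP Φ t / t ^ (p + 1)))
        = ∫⁻ t in Set.Ioi c', ENNReal.ofReal (Φ t / t ^ (p + 1)) := by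
    intro c' hc'
    refine setLIntegral_congr_fun measurableSet_Ioi ?_
    intro t ht
    dsimp only
    rw [phiP_eq t (le_of_lt (lt_trans hc' ht))]
  rcases le_or_gt c 1 with h | h
  · have : Jint Φ p ≤ ∫⁻ t in Set.Ioi c, ENNReal.ofReal (phiP Φ t / t ^ (p + 1)) :=
      lintegral_mono' (Measure.restrict_mono (Ioi_subset_Ioi h) le_rfl) le_rfl
    rw [hcong c hc] at this
    exact lt_of_le_of_lt this hfin
  · -- c > 1 : split Ioi 1 = Ioc 1 c ∪ Ioi c
    have hsplit : Set.Ioi (1:ℝ) = Set.Ioc 1 c ∪ Set.Ioi c := by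
      rw [Set.Ioc_union_Ioi_eq_Ioi h.le]
    have hdisj : Disjoint (Set.Ioc (1:ℝ) c) (Set.Ioi c) := by
      rw [Set.disjoint_left]; rintro x ⟨-, hx2⟩ hx3; exact absurd hx3 (not_lt.2 hx2)
    have : Jint Φ p = (∫⁻ t in Set.Ioc 1 c, ENNReal.ofReal (phiP Φ t / t ^ (p + 1)))
        + ∫⁻ t in Set.Ioi c, ENNReal.ofReal (phiP Φ t / t ^ (p + 1)) := by
      rw [Jint, hsplit, lintegral_union measurableSet_Ioi hdisj]
    rw [this, hcong c hc]
    have hbdd : (∫⁻ t in Set.Ioc 1 c, ENNReal.ofReal (phiP Φ t / t ^ (p + 1)))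
        ≤ ENNReal.ofReal (phiP Φ c) * volume (Set.Ioc 1 c) := by
      rw [← setLIntegral_const]
      refine setLIntegral_mono (by measurability) ?_
      intro t ht
      refine ENNReal.ofReal_le_ofReal ?_
      have ht1 : (1:ℝ) < t := ht.1
      have htp : (1:ℝ) ≤ t ^ (p+1) :=
        Real.one_le_rpow ht1.le (by linarith)
      calc phiP Φ t / t ^ (p+1) ≤ phiP Φ t / 1 :=
            div_le_div_of_nonneg_left (phiP_nonneg hΦ t) zero_lt_one htp
        _ = phiP Φ t := div_one _
        _ ≤ phiP Φ c := phiP_mono hΦ ht.2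
    have h1 : (∫⁻ t in Set.Ioc 1 c, ENNReal.ofReal (phiP Φ t / t ^ (p + 1))) < ⊤ := by
      refine lt_of_le_of_lt hbdd ?_
      exact ENNReal.mul_lt_top ENNReal.ofReal_lt_top (by simp [Real.volume_Ioc])
    exact ENNReal.add_lt_top.2 ⟨h1, hfin⟩


lemma scale_est (hΦ : IsNormalizedYoung Φ) (hp : 0 < p) {u : ℝ} (hu : 1 < u) :
    ENNReal.ofReal (phiP Φ u / u ^ p)
      ≤ ENNReal.ofReal (2 ^ (p+1)) *
        ∫⁻ t in Set.Ioo u (2*u), ENNReal.ofReal (phiP Φ t / t ^ (p + 1)) := by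
  have hu0 : (0:ℝ) < u := lt_trans zero_lt_one hu
  -- lower bound for the integral by a constant
  have hconst : ENNReal.ofReal (phiP Φ u / (2*u) ^ (p+1)) * volume (Set.Ioo u (2*u))
      ≤ ∫⁻ t in Set.Ioo u (2*u), ENNReal.ofReal (phiP Φ t / t ^ (p + 1)) := by
    rw [← setLIntegral_const]
    rw [← lintegral_indicator measurableSet_Ioo, ← lintegral_indicator measurableSet_Ioo]
    refine lintegral_mono fun t => ?_
    by_cases ht : t ∈ Set.Ioo u (2*u)
    · simp only [Set.indicator_of_mem ht]
      refine ENNReal.ofReal_le_ofReal ?_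
      have ht0 : 0 < t := lt_trans hu0 ht.1
      have h2u : (0:ℝ) < (2*u) ^ (p+1) := Real.rpow_pos_of_pos (by linarith) _
      have htp : t ^ (p+1) ≤ (2*u) ^ (p+1) :=
        Real.rpow_le_rpow ht0.le ht.2.le (by linarith)
      have hnum : phiP Φ u ≤ phiP Φ t := phiP_mono hΦ ht.1.le
      exact div_le_div₀ (le_trans (phiP_nonneg hΦ u) hnum) hnum
        (Real.rpow_pos_of_pos ht0 _) htp |>.trans_eq rfl |>.trans le_rfl
        |>.trans le_rfl
    · simp [Set.indicator_of_notMem ht]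
  have hvol : volume (Set.Ioo u (2*u)) = ENNReal.ofReal u := by
    rw [Real.volume_Ioo]; ring_nf
  calc ENNReal.ofReal (phiP Φ u / u ^ p)
      = ENNReal.ofReal (2 ^ (p+1)) *
          (ENNReal.ofReal (phiP Φ u / (2*u) ^ (p+1)) * ENNReal.ofReal u) := by
        rw [← ENNReal.ofReal_mul (div_nonneg (phiP_nonneg hΦ u)
          (le_of_lt (Real.rpow_pos_of_pos (by linarith) _))),
          ← ENNReal.ofReal_mul (le_of_lt (Real.rpow_pos_of_pos two_pos _))]
        congr 1
        have h2u : ((2*u):ℝ) ^ (p+1) = 2 ^ (p+1) * u ^ (p+1) :=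
          Real.mul_rpow (by norm_num) hu0.le
        have hup : u ^ (p+1) = u ^ p * u := by
          rw [Real.rpow_add hu0, Real.rpow_one]
        rw [h2u, hup]
        field_simp
    _ ≤ _ := by
        rw [← hvol]
        exact mul_le_mul_right hconst _

/-- coefficient and truncated-Young summand -/
def ck (p : ℝ) (k : ℤ) : ℝ≥0∞ := ENNReal.ofReal (((2:ℝ) ^ (k+1)) ^ p)
def gk (Φ : ℝ → ℝ) (k : ℤ) (s : ℝ) : ℝ≥0∞ :=
  if (2:ℝ) ^ k < 2 * s then ENNReal.ofReal (phiP Φ (2 * s / (2:ℝ) ^ k)) else 0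
def Bset (s : ℝ) (k : ℤ) : Set ℝ :=
  if (2:ℝ) ^ k < 2 * s then Set.Ioo (2*s/(2:ℝ)^k) (2*(2*s/(2:ℝ)^k)) else ∅

lemma Bset_meas (s : ℝ) (k : ℤ) : MeasurableSet (Bset s k) := by
  unfold Bset; split <;> simp [measurableSet_Ioo]

lemma Bset_disj (s : ℝ) : Pairwise (Function.onFun Disjoint (Bset s)) := by
  have key : ∀ i j : ℤ, i < j → Disjoint (Bset s i) (Bset s j) := by
    intro i j hij
    unfold Bset
    split
    · split
      · rename_i hi hj
        have h2i : (0:ℝ) < (2:ℝ)^i := zpow_pos (by norm_num) i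
        have h2j : (0:ℝ) < (2:ℝ)^j := zpow_pos (by norm_num) j
        have hs0 : (0:ℝ) < 2*s := lt_trans h2i hi
        rw [Set.disjoint_left]
        rintro x ⟨hx1, hx2⟩ ⟨hy1, hy2⟩
        have h1 : (2:ℝ)^(i+1) ≤ (2:ℝ)^j :=
          zpow_le_zpow_right₀ (by norm_num) (by omega)
        have h2 : (2:ℝ)^(i+1) = 2^i * 2 := zpow_add_one₀ (by norm_num) i
        have hkey : 2*(2*s/(2:ℝ)^j) ≤ 2*s/(2:ℝ)^i := by
          have e1 : 2*(2*s/(2:ℝ)^j) = (2*(2*s))/(2:ℝ)^j := by ring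
          rw [e1, div_le_div_iff₀ h2j h2i]
          nlinarith
        linarith
      · simp
    · simp
  intro i j hij
  rcases lt_or_gt_of_ne hij with h|h
  · exact key i j h
  · exact (key j i h).symm

lemma Bset_subset (s : ℝ) (k : ℤ) : Bset s k ⊆ Set.Ioi 1 := by
  unfold Bset
  split
  · rename_i hk
    intro x hx
    have h2k : (0:ℝ) < (2:ℝ)^k := zpow_pos (by norm_num) k
    have : 1 < 2*s/(2:ℝ)^k := (one_lt_div h2k).2 hk
    exact lt_trans this hx.1
  · simp

lemma sum_est (hΦ : IsNormalizedYoung Φ) (hp : 1 < p) {s : ℝ} (hs : 0 ≤ s) :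
    ∑' k : ℤ, ck p k * gk Φ k s
      ≤ (ENNReal.ofReal ((4:ℝ) ^ p * 2 ^ (p+1)) * Jint Φ p) * ENNReal.ofReal (s ^ p) := by
  rcases eq_or_lt_of_le hs with rfl | hs0
  · have hz : ∀ k : ℤ, gk Φ k 0 = 0 := by
      intro k
      have : ¬ ((2:ℝ) ^ k < 2 * 0) := by
        simp [not_lt, le_of_lt (zpow_pos (by norm_num : (0:ℝ) < 2) k)]
      rw [gk, if_neg this]
    simp [hz]
  · have hterm : ∀ k : ℤ, ck p k * gk Φ k s ≤
        (ENNReal.ofReal ((4:ℝ) ^ p * 2 ^ (p+1)) * ENNReal.ofReal (s ^ p)) *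
          ∫⁻ t in Bset s k, ENNReal.ofReal (phiP Φ t / t ^ (p + 1)) := by
      intro k
      by_cases hk : (2:ℝ) ^ k < 2 * s
      · set u : ℝ := 2*s/(2:ℝ)^k with hu
        have h2k : (0:ℝ) < (2:ℝ)^k := zpow_pos (by norm_num) k
        have hu1 : 1 < u := (one_lt_div h2k).2 hk
        have hu0 : 0 < u := lt_trans zero_lt_one hu1
        have hBk : Bset s k = Set.Ioo u (2*u) := by rw [Bset, if_pos hk]
        have halg : (((2:ℝ) ^ (k+1)) ^ p) * phiP Φ u
            = ((4:ℝ) ^ p * s ^ p) * (phiP Φ u / u ^ p) := by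
          have h2k1 : ((2:ℝ) ^ (k+1) : ℝ) = 4 * s / u := by
            rw [hu, zpow_add_one₀ (by norm_num : (2:ℝ) ≠ 0)]
            field_simp
            ring
          have hup : (0:ℝ) < u ^ p := Real.rpow_pos_of_pos hu0 _
          rw [h2k1, Real.div_rpow (by positivity) hu0.le,
            Real.mul_rpow (by norm_num) hs0.le]
          field_simp
          try ring
        calc ck p k * gk Φ k s
            = ENNReal.ofReal ((((2:ℝ) ^ (k+1)) ^ p) * phiP Φ u) := by
              rw [ck, gk, if_pos hk, ← ENNReal.ofReal_mul (by positivity)]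
          _ = ENNReal.ofReal (((4:ℝ) ^ p * s ^ p)) * ENNReal.ofReal (phiP Φ u / u ^ p) := by
              rw [halg, ENNReal.ofReal_mul (by positivity)]
          _ ≤ ENNReal.ofReal (((4:ℝ) ^ p * s ^ p)) * (ENNReal.ofReal (2 ^ (p+1)) *
                ∫⁻ t in Set.Ioo u (2*u), ENNReal.ofReal (phiP Φ t / t ^ (p + 1))) :=
              mul_le_mul_right (scale_est hΦ (lt_trans zero_lt_one hp) hu1) _
          _ = (ENNReal.ofReal ((4:ℝ) ^ p * 2 ^ (p+1)) * ENNReal.ofReal (s ^ p)) *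
                ∫⁻ t in Bset s k, ENNReal.ofReal (phiP Φ t / t ^ (p + 1)) := by
              rw [hBk]
              rw [ENNReal.ofReal_mul (by positivity),
                ENNReal.ofReal_mul (by positivity)]
              ring
      · have hg : gk Φ k s = 0 := by rw [gk, if_neg hk]
        simp [hg]
    refine le_trans (ENNReal.tsum_le_tsum hterm) ?_
    rw [ENNReal.tsum_mul_left]
    have hsum : ∑' k : ℤ, ∫⁻ t in Bset s k, ENNReal.ofReal (phiP Φ t / t ^ (p + 1))
        ≤ Jint Φ p := by
      have heq : ∑' k : ℤ, ∫⁻ t in Bset s k, ENNReal.ofReal (phiP Φ t / t ^ (p + 1))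
          = ∫⁻ t in ⋃ k, Bset s k, ENNReal.ofReal (phiP Φ t / t ^ (p + 1)) := by
        rw [Measure.restrict_iUnion (Bset_disj s) (Bset_meas s), lintegral_sum_measure]
      rw [heq, Jint]
      exact lintegral_mono' (Measure.restrict_mono
        (Set.iUnion_subset (Bset_subset s)) le_rfl) le_rfl
    calc (ENNReal.ofReal ((4:ℝ) ^ p * 2 ^ (p+1)) * ENNReal.ofReal (s ^ p)) *
          ∑' k : ℤ, ∫⁻ t in Bset s k, ENNReal.ofReal (phiP Φ t / t ^ (p + 1))
        ≤ (ENNReal.ofReal ((4:ℝ) ^ p * 2 ^ (p+1)) * ENNReal.ofReal (s ^ p)) * Jint Φ p :=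
          mul_le_mul_right hsum _
      _ = (ENNReal.ofReal ((4:ℝ) ^ p * 2 ^ (p+1)) * Jint Φ p) * ENNReal.ofReal (s ^ p) := by
          ring

def dQ (a : ℤ × ℤ) : Set ℂ :=
  Qbox ((2:ℝ)^a.1 * a.2) ((2:ℝ)^a.1 * (a.2+1))

lemma Qbox_meas (a b : ℝ) : MeasurableSet (Qbox a b) := by
  have : Qbox a b = (Complex.measurableEquivRealProd ⁻¹' (Set.Ioo a b ×ˢ Set.Ioo 0 (b-a))) := by
    ext z; simp [Qbox, Complex.measurableEquivRealProd, Set.mem_prod]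
  rw [this]
  exact Complex.measurableEquivRealProd.measurable (measurableSet_Ioo.prod measurableSet_Ioo)

lemma dQ_mem {j m : ℤ} {z : ℂ} :
    z ∈ dQ (j, m) ↔ ((2:ℝ)^j * m < z.re ∧ z.re < (2:ℝ)^j * (m+1)) ∧
      (0 < z.im ∧ z.im < (2:ℝ)^j) := by
  have h : (2:ℝ)^j * ((m:ℝ)+1) - (2:ℝ)^j * m = (2:ℝ)^j := by ring
  simp [dQ, Qbox, Set.mem_Ioo, h]

lemma dQ_subset_of {j m i n : ℤ} (hj : j ≤ i)
    (h1 : (2:ℝ)^i * n ≤ (2:ℝ)^j * m) (h2 : (2:ℝ)^j * (m+1) ≤ (2:ℝ)^i * (n+1)) :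
    dQ (j, m) ⊆ dQ (i, n) := by
  intro z hz
  rw [dQ_mem] at *
  have hh : (2:ℝ)^j ≤ (2:ℝ)^i := zpow_le_zpow_right₀ (by norm_num) hj
  exact ⟨⟨lt_of_le_of_lt h1 hz.1.1, lt_of_lt_of_le hz.1.2 h2⟩,
    hz.2.1, lt_of_lt_of_le hz.2.2 hh⟩

lemma dQ_disj_of {j m i n : ℤ} (h : (2:ℝ)^j * (m+1) ≤ (2:ℝ)^i * n) :
    Disjoint (dQ (j, m)) (dQ (i, n)) := by
  rw [Set.disjoint_left]
  intro z hz hz'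
  rw [dQ_mem] at *
  linarith [hz.1.2, hz'.1.1]

lemma int_tri (N m n : ℤ) :
    m + 1 ≤ N*n ∨ N*(n+1) ≤ m ∨ (N*n ≤ m ∧ m+1 ≤ N*(n+1)) := by
  by_cases h1 : m+1 ≤ N*n
  · exact Or.inl h1
  by_cases h2 : N*(n+1) ≤ m
  · exact Or.inr (Or.inl h2)
  push_neg at h1 h2
  exact Or.inr (Or.inr ⟨Int.lt_add_one_iff.1 h1, Int.add_one_le_iff.2 h2⟩)

lemma zpow_decomp {j i : ℤ} (hj : j ≤ i) :
    (2:ℝ)^i = (2:ℝ)^j * ((2^((i-j).toNat) : ℤ) : ℝ) := by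
  have h : i = j + ((i-j).toNat : ℤ) := by omega
  conv_lhs => rw [h]
  rw [zpow_add₀ (by norm_num : (2:ℝ) ≠ 0)]
  congr 1
  push_cast
  rw [zpow_natCast]

/-- trichotomy assuming levels ordered -/
lemma dQ_tri_aux {j m i n : ℤ} (hj : j ≤ i) :
    Disjoint (dQ (j,m)) (dQ (i,n)) ∨ dQ (j,m) ⊆ dQ (i,n) := by
  set N : ℤ := 2^((i-j).toNat) with hN
  have h2j : (0:ℝ) < (2:ℝ)^j := zpow_pos (by norm_num) j
  have hdec : (2:ℝ)^i = (2:ℝ)^j * (N : ℝ) := zpow_decomp hj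
  rcases int_tri N m n with h | h | ⟨h1, h2⟩
  · left
    refine dQ_disj_of ?_
    rw [hdec, mul_assoc, ← Int.cast_mul]
    have : ((m:ℝ)+1) ≤ ((N*n : ℤ) : ℝ) := by push_cast; exact_mod_cast by exact_mod_cast h
    calc (2:ℝ)^j * ((m:ℝ)+1) ≤ (2:ℝ)^j * ((N*n : ℤ) : ℝ) :=
          mul_le_mul_of_nonneg_left this h2j.le
      _ = _ := rfl
  · left
    refine (dQ_disj_of ?_).symm
    have : ((N*(n+1) : ℤ) : ℝ) ≤ (m:ℝ) := by exact_mod_cast h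
    calc (2:ℝ)^i * ((n:ℝ)+1) = (2:ℝ)^j * ((N*(n+1) : ℤ):ℝ) := by
          rw [hdec, mul_assoc]; congr 1; push_cast; ring
      _ ≤ (2:ℝ)^j * m := mul_le_mul_of_nonneg_left this h2j.le
  · right
    refine dQ_subset_of hj ?_ ?_
    · rw [hdec, mul_assoc, ← Int.cast_mul]
      exact mul_le_mul_of_nonneg_left (by exact_mod_cast h1) h2j.le
    · have : (2:ℝ)^i * ((n:ℝ)+1) = (2:ℝ)^j * ((N*(n+1) : ℤ):ℝ) := by
        rw [hdec, mul_assoc]; congr 1; push_cast; ring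
      rw [this]
      have hm : ((m:ℝ)+1) ≤ ((N*(n+1) : ℤ) : ℝ) := by exact_mod_cast h2
      exact mul_le_mul_of_nonneg_left hm h2j.le

lemma dQ_tri (a b : ℤ × ℤ) :
    Disjoint (dQ a) (dQ b) ∨ dQ a ⊆ dQ b ∨ dQ b ⊆ dQ a := by
  obtain ⟨j, m⟩ := a; obtain ⟨i, n⟩ := b
  rcases le_total j i with h | h
  · rcases dQ_tri_aux (m := m) (n := n) h with h' | h'
    · exact Or.inl h'
    · exact Or.inr (Or.inl h')
  · rcases dQ_tri_aux (m := n) (n := m) h with h' | h'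
    · exact Or.inl h'.symm
    · exact Or.inr (Or.inr h')

lemma dQ_level {a b : ℤ × ℤ} (h : dQ a ⊆ dQ b) (hne : a ≠ b) : a.1 < b.1 := by
  obtain ⟨j, m⟩ := a; obtain ⟨i, n⟩ := b
  have h2j : (0:ℝ) < (2:ℝ)^j := zpow_pos (by norm_num) j
  have h2i : (0:ℝ) < (2:ℝ)^i := zpow_pos (by norm_num) i
  -- interval inclusion on real parts
  have hsub : Set.Ioo ((2:ℝ)^j * m) ((2:ℝ)^j * (m+1)) ⊆
      Set.Ioo ((2:ℝ)^i * n) ((2:ℝ)^i * (n+1)) := by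
    intro x hx
    have hz : (⟨x, (2:ℝ)^j / 2⟩ : ℂ) ∈ dQ (j, m) := by
      rw [dQ_mem]
      exact ⟨⟨hx.1, hx.2⟩, by positivity, by linarith⟩
    have := h hz
    rw [dQ_mem] at this
    exact ⟨this.1.1, this.1.2⟩
  have hne' : (2:ℝ)^j * m < (2:ℝ)^j * (m+1) := by nlinarith
  rw [Set.Ioo_subset_Ioo_iff hne'] at hsub
  have hlen : (2:ℝ)^j ≤ (2:ℝ)^i := by nlinarith [hsub.1, hsub.2]
  have hji : j ≤ i := by
    rwa [zpow_le_zpow_iff_right₀ (by norm_num : (1:ℝ) < 2)] at hlen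
  rcases eq_or_lt_of_le hji with rfl | hlt
  · exfalso
    have h1 : (n:ℝ) ≤ m := by nlinarith [hsub.1]
    have h2 : (m:ℝ) ≤ n := by nlinarith [hsub.2]
    have hm : m = n := by exact_mod_cast le_antisymm h2 h1
    exact hne (by rw [hm])
  · exact hlt

lemma dQ_meas (a : ℤ × ℤ) : MeasurableSet (dQ a) := Qbox_meas _ _

lemma cover_bound (μ ρ : Measure ℂ) (S : Set (ℤ × ℤ))
    (hS : ∀ a ∈ S, μ (dQ a) ≤ ρ (dQ a)) :
    μ (⋃ a ∈ S, dQ a) ≤ ρ Set.univ := by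
  have main : ∀ N : ℕ, μ (⋃ a ∈ {a ∈ S | a.1 ≤ (N:ℤ)}, dQ a) ≤ ρ Set.univ := by
    intro N
    set SN := {a ∈ S | a.1 ≤ (N:ℤ)} with hSN
    set M := {a ∈ SN | ∀ b ∈ SN, dQ a ⊆ dQ b → b = a} with hM
    have hmax : ∀ a ∈ SN, ∃ b ∈ M, dQ a ⊆ dQ b := by
      suffices H : ∀ k : ℕ, ∀ a ∈ SN, ((N:ℤ) - a.1).toNat ≤ k → ∃ b ∈ M, dQ a ⊆ dQ b by
        intro a ha; exact H _ a ha le_rfl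
      intro k
      induction k with
      | zero =>
        intro a ha hk
        refine ⟨a, ⟨ha, ?_⟩, subset_rfl⟩
        intro b hb hab
        by_contra hne
        have := dQ_level hab (fun h => hne h.symm)
        have hbN := hb.2
        omega
      | succ k ih =>
        intro a ha hk
        by_cases hMem : a ∈ M
        · exact ⟨a, hMem, subset_rfl⟩
        · have : ∃ b ∈ SN, dQ a ⊆ dQ b ∧ b ≠ a := by
            rw [hM] at hMem
            simp only [Set.mem_setOf_eq] at hMem
            push_neg at hMem
            obtain ⟨b, hb, hab, hne⟩ := hMem ha
            exact ⟨b, hb, hab, hne⟩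
          obtain ⟨b, hb, hab, hne⟩ := this
          have hlt : a.1 < b.1 := dQ_level hab hne.symm
          have hbN : b.1 ≤ (N:ℤ) := hb.2
          have : ((N:ℤ) - b.1).toNat ≤ k := by omega
          obtain ⟨c, hc, hbc⟩ := ih b hb this
          exact ⟨c, hc, hab.trans hbc⟩
    have hMsub : M ⊆ SN := fun a ha => ha.1
    have hcup : ⋃ a ∈ SN, dQ a = ⋃ a ∈ M, dQ a := by
      apply Set.Subset.antisymm
      · refine Set.iUnion₂_subset fun a ha => ?_
        obtain ⟨b, hb, hab⟩ := hmax a ha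
        exact hab.trans (Set.subset_iUnion₂ (s := fun a _ => dQ a) b hb)
      · exact Set.iUnion₂_mono' fun a ha => ⟨a, hMsub ha, subset_rfl⟩
    have hdisj : M.PairwiseDisjoint dQ := by
      intro a ha b hb hne
      rcases dQ_tri a b with h | h | h
      · exact h
      · exact absurd (ha.2 b (hMsub hb) h).symm hne
      · exact absurd (hb.2 a (hMsub ha) h) hne
    calc μ (⋃ a ∈ SN, dQ a) = μ (⋃ a ∈ M, dQ a) := by rw [hcup]
      _ ≤ ∑' a : M, μ (dQ a) := measure_biUnion_le μ (Set.to_countable M) dQ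
      _ ≤ ∑' a : M, ρ (dQ a) :=
          ENNReal.tsum_le_tsum fun a => hS a (hMsub a.2).1
      _ = ρ (⋃ a ∈ M, dQ a) :=
          (measure_biUnion (Set.to_countable M) hdisj fun a _ => dQ_meas a).symm
      _ ≤ ρ Set.univ := measure_mono (Set.subset_univ _)
  have hcup2 : ⋃ a ∈ S, dQ a = ⋃ N : ℕ, ⋃ a ∈ {a ∈ S | a.1 ≤ (N:ℤ)}, dQ a := by
    apply Set.Subset.antisymm
    · refine Set.iUnion₂_subset fun a ha => ?_
      refine Set.subset_iUnion_of_subset a.1.toNat ?_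
      exact Set.subset_iUnion₂_of_subset a ⟨ha, by omega⟩ subset_rfl
    · exact Set.iUnion_subset fun N => Set.iUnion₂_mono' fun a ha => ⟨a, ha.1, subset_rfl⟩
  rw [hcup2]
  have hmono : Monotone (fun N : ℕ => ⋃ a ∈ {a ∈ S | a.1 ≤ (N:ℤ)}, dQ a) := by
    intro N N' hNN'
    exact Set.iUnion₂_mono' fun a ha => ⟨a, ⟨ha.1, le_trans ha.2 (by exact_mod_cast hNN')⟩,
      subset_rfl⟩
  rw [hmono.directed_le.measure_iUnion]
  exact iSup_le main

/-- truncated composition, measurable version -/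
def Gfun (Φ : ℝ → ℝ) (f : ℂ → ℂ) (l : ℝ) (z : ℂ) : ℝ :=
  if l < 2 * ‖f z‖ then phiP Φ (2 * ‖f z‖ / l) else 0

lemma Gfun_nonneg (hΦ : IsNormalizedYoung Φ) (l : ℝ) (z : ℂ) : 0 ≤ Gfun Φ f l z := by
  unfold Gfun; split
  · exact phiP_nonneg hΦ _
  · exact le_refl 0

lemma Gfun_meas (hΦ : IsNormalizedYoung Φ) (hf : Measurable f) (l : ℝ) :
    Measurable (Gfun Φ f l) := by
  have habs : Measurable fun z => ‖f z‖ :=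
    hf.norm
  unfold Gfun
  refine Measurable.ite ?_ ?_ measurable_const
  · exact measurableSet_lt measurable_const (habs.const_mul 2)
  · exact (phiP_meas hΦ).comp ((habs.const_mul 2).div_const l)

lemma ennreal_div_le_one {a b : ℝ≥0∞} (h : a ≤ b) : a / b ≤ 1 :=
  ENNReal.div_le_of_le_mul (by simpa using h)

lemma luxNorm_le {a b t : ℝ} (ht : 0 < t)
    (hc : (∫⁻ z in Qbox a b,
        ENNReal.ofReal (Φ (‖f z‖ / t) * ω z) ∂(Vm α)) /
          wvol α ω (Qbox a b) ≤ 1) :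
    luxNorm α Φ ω a b f ≤ ENNReal.ofReal t :=
  iInf_le_of_le t (iInf_le_of_le ht (iInf_le_of_le hc le_rfl))

lemma weak_core (hΦ : IsNormalizedYoung Φ) (hω : Measurable ω) (hω0 : ∀ z, 0 ≤ ω z)
    (hf : Measurable f) {l a b : ℝ} (hl : 0 < l)
    (h : ENNReal.ofReal l < luxNorm α Φ ω a b f) :
    wvol α ω (Qbox a b) < 2 * ∫⁻ z in Qbox a b,
      ENNReal.ofReal (Gfun Φ f l z * ω z) ∂(Vm α) := by
  by_contra hcon
  push_neg at hcon
  set W := wvol α ω (Qbox a b) with hW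
  refine absurd (luxNorm_le hl ?_) (not_le.2 h)
  rcases eq_or_ne W ⊤ with hWtop | hWne
  · rw [← hW, hWtop]; simp
  -- numerator bound
  have hpt : ∀ z : ℂ, ENNReal.ofReal (Φ (‖f z‖ / l) * ω z)
      ≤ ENNReal.ofReal (1/2) * ENNReal.ofReal (ω z)
        + ENNReal.ofReal (Gfun Φ f l z * ω z) := by
    intro z
    have habs : 0 ≤ ‖f z‖ := norm_nonneg _
    have hx : 0 ≤ ‖f z‖ / l := by positivity
    have key : Φ (‖f z‖ / l) ≤ 1/2 + Gfun Φ f l z := by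
      rw [← phiP_eq (Φ := Φ) _ hx]
      unfold Gfun
      split
      · rename_i hcase
        have : phiP Φ (‖f z‖ / l) ≤ phiP Φ (2 * ‖f z‖ / l) := by
          apply phiP_mono hΦ
          rw [div_le_div_iff₀ hl hl]
          nlinarith
        linarith
      · rename_i hcase
        push_neg at hcase
        have : ‖f z‖ / l ≤ 1/2 := by
          rw [div_le_iff₀ hl]; linarith
        have := phiP_le_half hΦ this
        linarith
    calc ENNReal.ofReal (Φ (‖f z‖ / l) * ω z)
        ≤ ENNReal.ofReal ((1/2 + Gfun Φ f l z) * ω z) :=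
          ENNReal.ofReal_le_ofReal (mul_le_mul_of_nonneg_right key (hω0 z))
      _ = ENNReal.ofReal (1/2) * ENNReal.ofReal (ω z)
            + ENNReal.ofReal (Gfun Φ f l z * ω z) := by
          rw [add_mul, ENNReal.ofReal_add (mul_nonneg (by norm_num) (hω0 z))
            (mul_nonneg (Gfun_nonneg hΦ l z) (hω0 z)), ENNReal.ofReal_mul (by norm_num)]
  have hnum : (∫⁻ z in Qbox a b,
      ENNReal.ofReal (Φ (‖f z‖ / l) * ω z) ∂(Vm α)) ≤ W := by
    have h1 : (∫⁻ z in Qbox a b,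
        ENNReal.ofReal (Φ (‖f z‖ / l) * ω z) ∂(Vm α))
        ≤ ∫⁻ z in Qbox a b, (ENNReal.ofReal (1/2) * ENNReal.ofReal (ω z)
          + ENNReal.ofReal (Gfun Φ f l z * ω z)) ∂(Vm α) :=
      lintegral_mono fun z => hpt z
    have h2 : (∫⁻ z in Qbox a b, (ENNReal.ofReal (1/2) * ENNReal.ofReal (ω z)
          + ENNReal.ofReal (Gfun Φ f l z * ω z)) ∂(Vm α))
        = ENNReal.ofReal (1/2) * W + ∫⁻ z in Qbox a b,
            ENNReal.ofReal (Gfun Φ f l z * ω z) ∂(Vm α) := by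
      rw [lintegral_add_left (hω.ennreal_ofReal.const_mul _)]
      congr 1
      exact lintegral_const_mul _ hω.ennreal_ofReal
    have h3 : ENNReal.ofReal (1/2) * W = W / 2 := by
      rw [ENNReal.ofReal_div_of_pos (by norm_num), ENNReal.ofReal_one,
        ENNReal.ofReal_ofNat, one_div, ENNReal.div_eq_inv_mul]
    have h4 : (∫⁻ z in Qbox a b, ENNReal.ofReal (Gfun Φ f l z * ω z) ∂(Vm α)) ≤ W / 2 := by
      rw [ENNReal.le_div_iff_mul_le (Or.inl (by norm_num)) (Or.inl (by norm_num)), mul_comm]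
      exact hcon
    calc (∫⁻ z in Qbox a b, ENNReal.ofReal (Φ (‖f z‖ / l) * ω z) ∂(Vm α))
        ≤ ENNReal.ofReal (1/2) * W + ∫⁻ z in Qbox a b,
            ENNReal.ofReal (Gfun Φ f l z * ω z) ∂(Vm α) := le_trans h1 (le_of_eq h2)
      _ ≤ W/2 + W/2 := by rw [h3]; exact add_le_add_right h4 _
      _ = W := ENNReal.add_halves W
  exact ennreal_div_le_one hnum

def dLux (α : ℝ) (Φ : ℝ → ℝ) (ω : ℂ → ℝ) (f : ℂ → ℂ) (a : ℤ × ℤ) : ℝ≥0∞ :=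
  luxNorm α Φ ω ((2:ℝ)^a.1 * a.2) ((2:ℝ)^a.1 * (a.2+1)) f

lemma dyadicMax_zero_eq (z : ℂ) :
    dyadicMax 0 α Φ ω f z = ⨆ (a : ℤ × ℤ) (_ : z ∈ dQ a), dLux α Φ ω f a := by
  apply le_antisymm
  · refine iSup_le fun I => iSup_le fun hI => iSup_le fun hz => ?_
    obtain ⟨j, m, h1, h2⟩ := hI
    simp only [mul_zero, add_zero] at h1 h2
    have hQ : Qbox I.1 I.2 = dQ (j, m) := by rw [h1, h2]; rfl
    have hL : luxNorm α Φ ω I.1 I.2 f = dLux α Φ ω f (j, m) := by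
      rw [h1, h2]; rfl
    rw [hL]
    exact le_iSup_of_le (j, m) (le_iSup_of_le (hQ ▸ hz) le_rfl)
  · refine iSup_le fun a => iSup_le fun hz => ?_
    have hI : ((2:ℝ)^a.1 * a.2, (2:ℝ)^a.1 * (a.2+1)) ∈ dyadicGrid 0 := by
      exact ⟨a.1, a.2, by simp, by simp⟩
    refine le_iSup_of_le ((2:ℝ)^a.1 * a.2, (2:ℝ)^a.1 * (a.2+1)) ?_
    exact le_iSup_of_le hI (le_iSup_of_le hz le_rfl)

lemma dyadicMax_meas :
    Measurable (dyadicMax 0 α Φ ω f) := by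
  have : dyadicMax 0 α Φ ω f =
      fun z => ⨆ (a : ℤ × ℤ), (dQ a).indicator (fun _ => dLux α Φ ω f a) z := by
    funext z
    rw [dyadicMax_zero_eq]
    congr 1
    funext a
    by_cases hz : z ∈ dQ a
    · simp [hz]
    · simp [hz]
  rw [this]
  exact Measurable.iSup fun a => Measurable.indicator measurable_const (Qbox_meas _ _)

lemma weak_bound (hΦ : IsNormalizedYoung Φ) (hω : Measurable ω) (hω0 : ∀ z, 0 ≤ ω z)
    (hf : Measurable f) {l : ℝ} (hl : 0 < l) :
    wvol α ω {z | ENNReal.ofReal l < dyadicMax 0 α Φ ω f z}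
      ≤ 2 * ∫⁻ z, ENNReal.ofReal (Gfun Φ f l z * ω z) ∂(Vm α) := by
  set μ : Measure ℂ := (Vm α).withDensity (fun z => ENNReal.ofReal (ω z)) with hμ
  set ρ : Measure ℂ := (Vm α).withDensity
    (fun z => 2 * ENNReal.ofReal (Gfun Φ f l z * ω z)) with hρ
  have hGmeas : Measurable (fun z => ENNReal.ofReal (Gfun Φ f l z * ω z)) :=
    ((Gfun_meas hΦ hf l).mul hω).ennreal_ofReal
  have hμa : ∀ E : Set ℂ, MeasurableSet E → μ E = wvol α ω E := fun E hE =>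
    withDensity_apply _ hE
  have hρa : ∀ E : Set ℂ, MeasurableSet E →
      ρ E = 2 * ∫⁻ z in E, ENNReal.ofReal (Gfun Φ f l z * ω z) ∂(Vm α) := by
    intro E hE
    rw [hρ, withDensity_apply _ hE]
    exact lintegral_const_mul _ hGmeas
  set S : Set (ℤ × ℤ) := {a | ENNReal.ofReal l < dLux α Φ ω f a} with hS
  have hcov : {z | ENNReal.ofReal l < dyadicMax 0 α Φ ω f z} ⊆ ⋃ a ∈ S, dQ a := by
    intro z hz
    rw [Set.mem_setOf_eq, dyadicMax_zero_eq] at hz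
    rw [lt_iSup_iff] at hz
    obtain ⟨a, ha⟩ := hz
    rw [lt_iSup_iff] at ha
    obtain ⟨hza, hlt⟩ := ha
    exact Set.mem_biUnion (show a ∈ S from hlt) hza
  have hqual : ∀ a ∈ S, μ (dQ a) ≤ ρ (dQ a) := by
    intro a ha
    rw [hμa (dQ a) (Qbox_meas _ _), hρa (dQ a) (Qbox_meas _ _)]
    exact (weak_core hΦ hω hω0 hf hl ha).le
  have hmeasset : MeasurableSet {z | ENNReal.ofReal l < dyadicMax 0 α Φ ω f z} :=
    measurableSet_lt measurable_const dyadicMax_meas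
  calc wvol α ω {z | ENNReal.ofReal l < dyadicMax 0 α Φ ω f z}
      = μ {z | ENNReal.ofReal l < dyadicMax 0 α Φ ω f z} := (hμa _ hmeasset).symm
    _ ≤ μ (⋃ a ∈ S, dQ a) := measure_mono hcov
    _ ≤ ρ Set.univ := cover_bound μ ρ S hqual
    _ = 2 * ∫⁻ z, ENNReal.ofReal (Gfun Φ f l z * ω z) ∂(Vm α) := by
        rw [hρ, withDensity_apply _ MeasurableSet.univ, Measure.restrict_univ]
        exact lintegral_const_mul _ hGmeas

lemma enn_layer {p : ℝ} (hp : 1 ≤ p) (x : ℝ≥0∞) :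
    x ^ p ≤ ∑' k : ℤ, ck p k *
      (if ENNReal.ofReal ((2:ℝ)^k) < x then (1:ℝ≥0∞) else 0) := by
  have hp0 : (0:ℝ) < p := lt_of_lt_of_le zero_lt_one hp
  rcases eq_or_ne x 0 with rfl | hx0
  · rw [ENNReal.zero_rpow_of_pos hp0]; exact zero_le
  rcases eq_or_ne x ⊤ with rfl | hxt
  · have hcond : ∀ k : ℤ, (if ENNReal.ofReal ((2:ℝ)^k) < (⊤:ℝ≥0∞) then (1:ℝ≥0∞) else 0) = 1 := by
      intro k; rw [if_pos ENNReal.ofReal_lt_top]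
    simp only [hcond, mul_one]
    by_contra hlt
    push_neg at hlt
    have hne : ∑' k : ℤ, ck p k ≠ ⊤ := hlt.ne_top
    obtain ⟨n, hn⟩ := ENNReal.exists_nat_gt hne
    have hterm : ∀ i : ℕ, (1:ℝ≥0∞) ≤ ck p (i:ℤ) := by
      intro i
      rw [ck, show (1:ℝ≥0∞) = ENNReal.ofReal 1 by simp]
      apply ENNReal.ofReal_le_ofReal
      apply Real.one_le_rpow _ hp0.le
      apply one_le_zpow₀ (by norm_num : (1:ℝ) ≤ 2) (by omega)
    set Fn := (Finset.range n).image (fun i : ℕ => (i:ℤ)) with hFn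
    have hcard : Fn.card = n := by
      rw [hFn, Finset.card_image_of_injective _ (fun a b => by omega)]
      exact Finset.card_range n
    have h1 : (n : ℝ≥0∞) ≤ ∑ k ∈ Fn, ck p k := by
      calc (n : ℝ≥0∞) = ∑ k ∈ Fn, 1 := by rw [Finset.sum_const, hcard]; simp
        _ ≤ ∑ k ∈ Fn, ck p k := by
            refine Finset.sum_le_sum fun k hk => ?_
            rw [hFn] at hk
            obtain ⟨i, -, rfl⟩ := Finset.mem_image.1 hk
            exact hterm i
    have h2 : ∑ k ∈ Fn, ck p k ≤ ∑' k : ℤ, ck p k := ENNReal.sum_le_tsum Fn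
    exact absurd (le_trans h1 h2) (not_le.2 hn)
  · have hr : 0 < x.toReal := ENNReal.toReal_pos hx0 hxt
    obtain ⟨k, hk1, hk2⟩ := exists_mem_Ioc_zpow hr one_lt_two
    have h2k : (0:ℝ) < (2:ℝ)^k := zpow_pos (by norm_num) k
    have h2k1 : (0:ℝ) < (2:ℝ)^(k+1) := zpow_pos (by norm_num) (k+1)
    have hlt : ENNReal.ofReal ((2:ℝ)^k) < x :=
      (ENNReal.ofReal_lt_iff_lt_toReal h2k.le hxt).2 hk1
    have hle : x ≤ ENNReal.ofReal ((2:ℝ)^(k+1)) :=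
      (ENNReal.le_ofReal_iff_toReal_le hxt h2k1.le).2 hk2
    have hxp : x ^ p ≤ ck p k := by
      calc x ^ p ≤ (ENNReal.ofReal ((2:ℝ)^(k+1))) ^ p :=
            ENNReal.rpow_le_rpow hle hp0.le
        _ = ck p k := ENNReal.ofReal_rpow_of_nonneg h2k1.le hp0.le
    calc x ^ p ≤ ck p k * (if ENNReal.ofReal ((2:ℝ)^k) < x then (1:ℝ≥0∞) else 0) := by
          rw [if_pos hlt, mul_one]; exact hxp
      _ ≤ _ := ENNReal.le_tsum k


end StatementTenProof

/-- Lemma 2.4: for `Φ ∈ B_p` there is `C > 0` depending only on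
`p` and `Φ` with `‖M^d_{Φ,ω,α} f‖_{L^p(ω dV_α)} ≤ C ‖f‖_{L^p(ω dV_α)}`. -/
theorem statement10 (p : ℝ) (hp : 1 < p)
    (Φ : ℝ → ℝ) (hΦ : IsNormalizedYoung Φ) (hΦp : InBp Φ p) :
    ∃ C : ℝ, 0 < C ∧ ∀ α : ℝ, -1 < α → ∀ ω : ℂ → ℝ, IsWeight α ω →
      ∀ f : ℂ → ℂ, Measurable f → HasCompactSupport f →
      (∫⁻ z, (dyadicMax 0 α Φ ω f z) ^ p * ENNReal.ofReal (ω z) ∂(Vm α)) ^ (1 / p)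
        ≤ ENNReal.ofReal C * (lpInt α p ω f) ^ (1 / p) := by
  have hp0 : (0:ℝ) < p := lt_trans zero_lt_one hp
  set C₀ : ℝ≥0∞ :=
    2 * (ENNReal.ofReal ((4:ℝ) ^ p * 2 ^ (p+1)) * Jint Φ p) with hC₀
  have hC₀top : C₀ ≠ ⊤ := by
    rw [hC₀]
    exact (ENNReal.mul_lt_top (by norm_num)
      (ENNReal.mul_lt_top ENNReal.ofReal_lt_top (Jint_lt_top hΦ hp hΦp))).ne
  have hC₀p : C₀ ^ (1/p) ≠ ⊤ :=
    (ENNReal.rpow_lt_top_of_nonneg (by positivity) hC₀top).ne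
  refine ⟨(C₀ ^ (1/p)).toReal + 1, by positivity, ?_⟩
  intro α hα ω hω f hf hfc
  obtain ⟨hωm, hω0, -⟩ := hω
  set F := dyadicMax 0 α Φ ω f with hF
  have hFm : Measurable F := dyadicMax_meas
  set U : ℤ → Set ℂ := fun k => {z | ENNReal.ofReal ((2:ℝ)^k) < F z} with hU
  have hUm : ∀ k, MeasurableSet (U k) := fun k =>
    measurableSet_lt measurable_const hFm
  have hGm : ∀ k : ℤ, Measurable fun z => ENNReal.ofReal (Gfun Φ f ((2:ℝ)^k) z * ω z) :=
    fun k => ((Gfun_meas hΦ hf _).mul hωm).ennreal_ofReal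
  -- Step 1
  have I1 : (∫⁻ z, F z ^ p * ENNReal.ofReal (ω z) ∂(Vm α))
      ≤ ∑' k : ℤ, ck p k * wvol α ω (U k) := by
    have hpt : ∀ z, F z ^ p * ENNReal.ofReal (ω z)
        ≤ ∑' k : ℤ, ck p k * ((U k).indicator (fun _ => ENNReal.ofReal (ω z)) z) := by
      intro z
      have h1 := enn_layer hp.le (F z)
      have : F z ^ p * ENNReal.ofReal (ω z) ≤
          (∑' k : ℤ, ck p k * (if ENNReal.ofReal ((2:ℝ)^k) < F z then (1:ℝ≥0∞) else 0))
            * ENNReal.ofReal (ω z) := mul_le_mul_left h1 _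
      refine le_trans this (le_of_eq ?_)
      rw [← ENNReal.tsum_mul_right]
      congr 1; funext k
      by_cases hzk : z ∈ U k
      · have hzk' : ENNReal.ofReal ((2:ℝ)^k) < F z := hzk
        rw [Set.indicator_of_mem hzk, if_pos hzk', mul_one]
      · have hzk' : ¬ ENNReal.ofReal ((2:ℝ)^k) < F z := hzk
        rw [Set.indicator_of_notMem hzk, if_neg hzk', mul_zero, zero_mul]
    calc (∫⁻ z, F z ^ p * ENNReal.ofReal (ω z) ∂(Vm α))
        ≤ ∫⁻ z, ∑' k : ℤ, ck p k * ((U k).indicator (fun _ => ENNReal.ofReal (ω z)) z)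
            ∂(Vm α) := lintegral_mono hpt
      _ = ∑' k : ℤ, ∫⁻ z, ck p k * ((U k).indicator (fun _ => ENNReal.ofReal (ω z)) z)
            ∂(Vm α) := by
          refine lintegral_tsum fun k => ?_
          have : (fun z => ck p k * ((U k).indicator (fun _ => ENNReal.ofReal (ω z)) z))
              = fun z => ck p k * ((U k).indicator (fun w => ENNReal.ofReal (ω w)) z) := by
            funext z
            by_cases hzk : z ∈ U k <;>
              simp [Set.indicator_of_mem, Set.indicator_of_notMem, hzk]
          rw [this]
          exact (measurable_const.mul (hωm.ennreal_ofReal.indicator (hUm k))).aemeasurable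
      _ = ∑' k : ℤ, ck p k * wvol α ω (U k) := by
          congr 1; funext k
          have heq : (fun z => ck p k * ((U k).indicator (fun _ => ENNReal.ofReal (ω z)) z))
              = fun z => ck p k * ((U k).indicator (fun w => ENNReal.ofReal (ω w)) z) := by
            funext z
            by_cases hzk : z ∈ U k <;>
              simp [Set.indicator_of_mem, Set.indicator_of_notMem, hzk]
          rw [heq, lintegral_const_mul _ (hωm.ennreal_ofReal.indicator (hUm k)),
            lintegral_indicator (hUm k)]
          rfl
  -- Step 2 + 3
  have I2 : ∑' k : ℤ, ck p k * wvol α ω (U k)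
      ≤ 2 * ∫⁻ z, ∑' k : ℤ, ck p k *
          ENNReal.ofReal (Gfun Φ f ((2:ℝ)^k) z * ω z) ∂(Vm α) := by
    have hwk : ∀ k : ℤ, wvol α ω (U k)
        ≤ 2 * ∫⁻ z, ENNReal.ofReal (Gfun Φ f ((2:ℝ)^k) z * ω z) ∂(Vm α) :=
      fun k => weak_bound hΦ hωm hω0 hf (zpow_pos (by norm_num) k)
    calc ∑' k : ℤ, ck p k * wvol α ω (U k)
        ≤ ∑' k : ℤ, ck p k *
            (2 * ∫⁻ z, ENNReal.ofReal (Gfun Φ f ((2:ℝ)^k) z * ω z) ∂(Vm α)) :=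
          ENNReal.tsum_le_tsum fun k => mul_le_mul_right (hwk k) _
      _ = 2 * ∑' k : ℤ, ∫⁻ z, ck p k *
            ENNReal.ofReal (Gfun Φ f ((2:ℝ)^k) z * ω z) ∂(Vm α) := by
          rw [← ENNReal.tsum_mul_left]
          congr 1; funext k
          rw [lintegral_const_mul _ (hGm k)]
          ring
      _ = 2 * ∫⁻ z, ∑' k : ℤ, ck p k *
            ENNReal.ofReal (Gfun Φ f ((2:ℝ)^k) z * ω z) ∂(Vm α) := by
          rw [lintegral_tsum fun k => ((hGm k).const_mul _).aemeasurable]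
  -- Step 4 + 5
  have I3 : (∫⁻ z, ∑' k : ℤ, ck p k *
        ENNReal.ofReal (Gfun Φ f ((2:ℝ)^k) z * ω z) ∂(Vm α))
      ≤ (ENNReal.ofReal ((4:ℝ) ^ p * 2 ^ (p+1)) * Jint Φ p) * lpInt α p ω f := by
    have hpt : ∀ z, ∑' k : ℤ, ck p k * ENNReal.ofReal (Gfun Φ f ((2:ℝ)^k) z * ω z)
        ≤ (ENNReal.ofReal ((4:ℝ) ^ p * 2 ^ (p+1)) * Jint Φ p) *
            (ENNReal.ofReal (‖f z‖) ^ p * ENNReal.ofReal (ω z)) := by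
      intro z
      set s := ‖f z‖ with hs
      have hs0 : 0 ≤ s := norm_nonneg _
      have heq : ∀ k : ℤ, ENNReal.ofReal (Gfun Φ f ((2:ℝ)^k) z * ω z)
          = gk Φ k s * ENNReal.ofReal (ω z) := by
        intro k
        rw [Gfun, gk]
        by_cases hcase : (2:ℝ)^k < 2 * s
        · rw [if_pos hcase, if_pos hcase, ENNReal.ofReal_mul (phiP_nonneg hΦ _)]
        · rw [if_neg hcase, if_neg hcase, zero_mul, ENNReal.ofReal_zero, zero_mul]
      calc ∑' k : ℤ, ck p k * ENNReal.ofReal (Gfun Φ f ((2:ℝ)^k) z * ω z)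
          = (∑' k : ℤ, ck p k * gk Φ k s) * ENNReal.ofReal (ω z) := by
            rw [← ENNReal.tsum_mul_right]
            congr 1; funext k; rw [heq k, mul_assoc]
        _ ≤ ((ENNReal.ofReal ((4:ℝ) ^ p * 2 ^ (p+1)) * Jint Φ p) * ENNReal.ofReal (s ^ p))
              * ENNReal.ofReal (ω z) :=
            mul_le_mul_left (sum_est hΦ hp hs0) _
        _ = (ENNReal.ofReal ((4:ℝ) ^ p * 2 ^ (p+1)) * Jint Φ p) *
              (ENNReal.ofReal s ^ p * ENNReal.ofReal (ω z)) := by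
            rw [ENNReal.ofReal_rpow_of_nonneg hs0 hp0.le, mul_assoc]
    calc (∫⁻ z, ∑' k : ℤ, ck p k * ENNReal.ofReal (Gfun Φ f ((2:ℝ)^k) z * ω z) ∂(Vm α))
        ≤ ∫⁻ z, (ENNReal.ofReal ((4:ℝ) ^ p * 2 ^ (p+1)) * Jint Φ p) *
            (ENNReal.ofReal (‖f z‖) ^ p * ENNReal.ofReal (ω z)) ∂(Vm α) :=
          lintegral_mono hpt
      _ = (ENNReal.ofReal ((4:ℝ) ^ p * 2 ^ (p+1)) * Jint Φ p) * lpInt α p ω f := by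
          rw [lpInt, lintegral_const_mul]
          have habs : Measurable fun z => ‖f z‖ :=
            hf.norm
          exact (habs.ennreal_ofReal.pow_const p).mul hωm.ennreal_ofReal
  -- combine
  have Itot : (∫⁻ z, F z ^ p * ENNReal.ofReal (ω z) ∂(Vm α)) ≤ C₀ * lpInt α p ω f := by
    calc (∫⁻ z, F z ^ p * ENNReal.ofReal (ω z) ∂(Vm α))
        ≤ ∑' k : ℤ, ck p k * wvol α ω (U k) := I1
      _ ≤ 2 * ∫⁻ z, ∑' k : ℤ, ck p k *
            ENNReal.ofReal (Gfun Φ f ((2:ℝ)^k) z * ω z) ∂(Vm α) := I2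
      _ ≤ 2 * ((ENNReal.ofReal ((4:ℝ) ^ p * 2 ^ (p+1)) * Jint Φ p) * lpInt α p ω f) :=
          mul_le_mul_right I3 _
      _ = C₀ * lpInt α p ω f := by rw [hC₀]; ring
  calc (∫⁻ z, (dyadicMax 0 α Φ ω f z) ^ p * ENNReal.ofReal (ω z) ∂(Vm α)) ^ (1/p)
      ≤ (C₀ * lpInt α p ω f) ^ (1/p) :=
        ENNReal.rpow_le_rpow Itot (by positivity)
    _ = C₀ ^ (1/p) * (lpInt α p ω f) ^ (1/p) :=
        ENNReal.mul_rpow_of_nonneg _ _ (by positivity)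
    _ ≤ ENNReal.ofReal ((C₀ ^ (1/p)).toReal + 1) * (lpInt α p ω f) ^ (1/p) := by
        refine mul_le_mul_left ?_ _
        calc C₀ ^ (1/p) = ENNReal.ofReal ((C₀ ^ (1/p)).toReal) :=
              (ENNReal.ofReal_toReal hC₀p).symm
          _ ≤ ENNReal.ofReal ((C₀ ^ (1/p)).toReal + 1) :=
              ENNReal.ofReal_le_ofReal (by linarith)
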